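/- Let n ≥ 1, let d⁰ ∈ ℝ^n satisfy d⁰_i ≥ 0 for all i, let α > 0 and Γ ≥ 0, and let U = U(d⁰, α, Γ) be the budgeted uncertainty set. For any allocation x ∈ {0,1}^n, let I = {i : x_i = 1} and Ī = {i : x_i = 0}, and for S ∈ {I, Ī} set K_S = min(|S|, ⌊Γ⌋) and Δ_S = min(Γ, |S|) − min(⌊Γ⌋, |S|). Then sup_{d ∈ U} M(x, d) = max_{S ∈ {I, Ī}} ( ∑_{i ∈ S} d⁰_i + α · ( ∑_{k=1}^{K_S} (d⁰)^S_{(k)} + Δ_S · (d⁰)^S_{(K_S+1)} ) ). In particular, the static-allocation worst-case makespan SA(U) is bounded above by this quantity for every choice of x. -/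

import Mathlib

open Finset

/-- Makespan of assignment `f` of `n` tasks to `m` machines under durations `d`. -/
noncomputable def mk {n m : ℕ} (f : Fin n → Fin m) (d : Fin n → ℝ) : ℝ :=
  ⨆ j : Fin m, ∑ i ∈ Finset.univ.filter (fun i => f i = j), d i

/-- Two-machine makespan of allocation `x` under durations `d`. -/
noncomputable def M2 {n : ℕ} (x : Fin n → Bool) (d : Fin n → ℝ) : ℝ :=
  max (∑ i ∈ Finset.univ.filter (fun i => x i = true), d i)
      (∑ i ∈ Finset.univ.filter (fun i => x i = false), d i)

/-- Budgeted uncertainty set `U(d⁰, α, Γ)`. -/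
def budgetU {n : ℕ} (d0 : Fin n → ℝ) (α Γ : ℝ) : Set (Fin n → ℝ) :=
  { d | ∃ u : Fin n → ℝ, (∀ i, u i ∈ Set.Icc (0:ℝ) 1) ∧
        (∀ i, d i = d0 i * (1 + α * u i)) ∧ (∑ i, u i) ≤ Γ }

/-- Static-allocation worst-case makespan on two machines. -/
noncomputable def SA {n : ℕ} (U : Set (Fin n → ℝ)) : ℝ :=
  ⨅ x : Fin n → Bool, sSup ((fun d => M2 x d) '' U)

/-- Perfect-hindsight worst-case makespan on two machines. -/
noncomputable def PH {n : ℕ} (U : Set (Fin n → ℝ)) : ℝ :=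
  sSup ((fun d => ⨅ x : Fin n → Bool, M2 x d) '' U)

/-- `kthLargest S c k` is the `k`-th largest value (1-based) among `(c i)_{i ∈ S}`,
with value `0` when `k > |S|` (in particular `c^S_{(|S|+1)} = 0`). -/
noncomputable def kthLargest {n : ℕ} (S : Finset (Fin n)) (c : Fin n → ℝ) (k : ℕ) : ℝ :=
  ((S.val.map c).sort (· ≥ ·)).getD (k - 1) 0

section facts
variable {n : ℕ} (S : Finset (Fin n)) (d0 : Fin n → ℝ) (Γ : ℝ)

-- basic facts about sorted list
lemma lfacts (hd0 : ∀ i, 0 ≤ d0 i) :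
    ((S.val.map d0).sort (· ≥ ·)).Pairwise (· ≥ ·) ∧
    ((S.val.map d0).sort (· ≥ ·)).length = S.card ∧
    (∀ a ∈ (S.val.map d0).sort (· ≥ ·), (0:ℝ) ≤ a) := by
  refine ⟨Multiset.pairwise_sort _ _, ?_, ?_⟩
  · rw [Multiset.length_sort, Multiset.card_map]; rfl
  · intro a ha
    rw [Multiset.mem_sort, Multiset.mem_map] at ha
    obtain ⟨i, _, rfl⟩ := ha
    exact hd0 i

lemma sum_Icc_kth (K : ℕ) :
    ∑ k ∈ Finset.Icc 1 K, kthLargest S d0 k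
      = ∑ k ∈ Finset.range K, ((S.val.map d0).sort (· ≥ ·)).getD k 0 := by
  rw [← Finset.Ico_add_one_right_eq_Icc, Finset.sum_Ico_eq_sum_range]
  simp [kthLargest]

lemma delta_facts (hΓ : 0 ≤ Γ) (m : ℕ) :
    0 ≤ min Γ (m:ℝ) - min (⌊Γ⌋₊:ℝ) (m:ℝ) ∧ min Γ (m:ℝ) - min (⌊Γ⌋₊:ℝ) (m:ℝ) ≤ 1 ∧
    ((min m ⌊Γ⌋₊ : ℕ) : ℝ) = min (⌊Γ⌋₊:ℝ) (m:ℝ) := by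
  have hfl : (⌊Γ⌋₊:ℝ) ≤ Γ := Nat.floor_le hΓ
  refine ⟨by simp only [sub_nonneg]; exact min_le_min_right _ hfl, ?_, ?_⟩
  · rcases le_or_gt (m:ℝ) (⌊Γ⌋₊:ℝ) with h | h
    · rw [min_eq_right h, min_eq_right (le_trans h hfl)]; simp
    · rw [min_eq_left h.le]
      have := Nat.lt_floor_add_one Γ
      have h2 : min Γ (m:ℝ) ≤ Γ := min_le_left _ _
      linarith
  · push_cast [Nat.cast_min]; rw [min_comm]
end facts

lemma list_sum_getD (l : List ℝ) : l.sum = ∑ k ∈ Finset.range l.length, l.getD k 0 := by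
  induction l with
  | nil => simp
  | cons a t ih =>
    rw [List.sum_cons, List.length_cons, Finset.sum_range_succ', ih]
    simp [add_comm]

lemma sorted_getD_mono {l : List ℝ} (hl : l.Pairwise (· ≥ ·)) {i j : ℕ}
    (hij : i ≤ j) (hj : j < l.length) : l.getD j 0 ≤ l.getD i 0 := by
  rcases eq_or_lt_of_le hij with rfl | hij'
  · exact le_refl _
  · rw [List.getD_eq_getElem _ _ hj, List.getD_eq_getElem _ _ (lt_trans hij' hj)]
    have := List.pairwise_iff_get.mp hl ⟨i, lt_trans hij' hj⟩ ⟨j, hj⟩ hij'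
    simpa [List.get_eq_getElem] using this

lemma sum_S_eq_sum_range {n : ℕ} (S : Finset (Fin n)) (c : Fin n → ℝ) (f : ℝ → ℝ) :
    ∑ i ∈ S, f (c i) = ∑ k ∈ Finset.range S.card,
      f (((S.val.map c).sort (· ≥ ·)).getD k 0) := by
  set l := (S.val.map c).sort (· ≥ ·) with hldef
  have hl : (↑l : Multiset ℝ) = S.val.map c := Multiset.sort_eq _ _
  have hlen : l.length = S.card := by
    rw [hldef, Multiset.length_sort, Multiset.card_map]; rfl
  have h1 : ∑ i ∈ S, f (c i) = ((S.val.map c).map f).sum := by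
    rw [Multiset.map_map]; rfl
  rw [h1, ← hl, Multiset.map_coe, Multiset.sum_coe, list_sum_getD, List.length_map, hlen]
  refine Finset.sum_congr rfl fun k hk => ?_
  rw [Finset.mem_range] at hk
  rw [List.getD_eq_getElem _ _ (by rw [List.length_map, hlen]; exact hk),
    List.getElem_map, List.getD_eq_getElem _ _ (by rw [hlen]; exact hk)]

lemma knap_ub_u {n : ℕ} (S : Finset (Fin n)) (d0 : Fin n → ℝ) (hd0 : ∀ i, 0 ≤ d0 i)
    (Γ : ℝ) (hΓ : 0 ≤ Γ) (u : Fin n → ℝ) (hu : ∀ i, u i ∈ Set.Icc (0:ℝ) 1)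
    (hsum : ∑ i, u i ≤ Γ) :
    ∑ i ∈ S, d0 i * u i ≤
      (∑ k ∈ Finset.Icc 1 (min S.card ⌊Γ⌋₊), kthLargest S d0 k) +
        (min Γ (S.card : ℝ) - min (⌊Γ⌋₊ : ℝ) (S.card : ℝ)) *
          kthLargest S d0 (min S.card ⌊Γ⌋₊ + 1) := by
  obtain ⟨hsort, hlen, hpos⟩ := lfacts S d0 hd0
  set l := (S.val.map d0).sort (· ≥ ·) with hldef
  set m := S.card with hmdef
  set K := min m ⌊Γ⌋₊ with hKdef
  set θ := l.getD K 0 with hθdef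
  have hKm : K ≤ m := min_le_left _ _
  have hgetD0 : ∀ k : ℕ, 0 ≤ l.getD k 0 := by
    intro k
    rcases lt_or_ge k l.length with h | h
    · rw [List.getD_eq_getElem _ _ h]; exact hpos _ (l.getElem_mem h)
    · rw [List.getD_eq_default _ _ h]
  have hθ0 : 0 ≤ θ := hgetD0 K
  have hσ : ∑ i ∈ S, u i ≤ min Γ (m:ℝ) := by
    refine le_min (le_trans ?_ hsum) ?_
    · exact Finset.sum_le_sum_of_subset_of_nonneg (Finset.subset_univ S)
        (fun i _ _ => (hu i).1)
    · calc ∑ i ∈ S, u i ≤ ∑ i ∈ S, 1 := Finset.sum_le_sum (fun i _ => (hu i).2)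
        _ = (m:ℝ) := by simp [hmdef]
  have step1 : ∑ i ∈ S, d0 i * u i ≤ (∑ i ∈ S, max (d0 i - θ) 0) + θ * min Γ (m:ℝ) := by
    have h1 : ∀ i ∈ S, d0 i * u i ≤ max (d0 i - θ) 0 + θ * u i := by
      intro i _
      have h2 : (d0 i - θ) * u i ≤ max (d0 i - θ) 0 := by
        rcases le_or_gt θ (d0 i) with h | h
        · calc (d0 i - θ) * u i ≤ (d0 i - θ) * 1 :=
              mul_le_mul_of_nonneg_left (hu i).2 (by linarith)
            _ = d0 i - θ := mul_one _
            _ ≤ max (d0 i - θ) 0 := le_max_left _ _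
        · exact le_trans (mul_nonpos_of_nonpos_of_nonneg (by linarith) (hu i).1)
            (le_max_right _ _)
      nlinarith [h2]
    calc ∑ i ∈ S, d0 i * u i ≤ ∑ i ∈ S, (max (d0 i - θ) 0 + θ * u i) :=
        Finset.sum_le_sum h1
      _ = (∑ i ∈ S, max (d0 i - θ) 0) + θ * ∑ i ∈ S, u i := by
          rw [Finset.sum_add_distrib, Finset.mul_sum]
      _ ≤ _ := add_le_add_right (mul_le_mul_of_nonneg_left hσ hθ0) _
  have step2 : ∑ i ∈ S, max (d0 i - θ) 0 = ∑ k ∈ Finset.range K, (l.getD k 0 - θ) := by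
    rw [sum_S_eq_sum_range S d0 (fun a => max (a - θ) 0)]
    have hsplit : Finset.range m = Finset.Ico 0 K ∪ Finset.Ico K m := by
      rw [Finset.range_eq_Ico, Finset.Ico_union_Ico_eq_Ico (Nat.zero_le K) hKm]
    rw [← hmdef, hsplit, Finset.sum_union (by
      simp [Finset.disjoint_left, Finset.mem_Ico]; omega)]
    have hA : ∑ k ∈ Finset.Ico 0 K, max (l.getD k 0 - θ) 0
        = ∑ k ∈ Finset.range K, (l.getD k 0 - θ) := by
      rw [← Finset.range_eq_Ico]
      refine Finset.sum_congr rfl fun k hk => ?_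
      rw [Finset.mem_range] at hk
      have hθk : θ ≤ l.getD k 0 := by
        rcases lt_or_eq_of_le hKm with h | h
        · exact sorted_getD_mono hsort (le_of_lt hk) (by rw [hlen]; exact h)
        · have hθz : θ = 0 := by
            rw [hθdef]; exact List.getD_eq_default _ _ (by rw [hlen, ← h])
          rw [hθz]; exact hgetD0 k
      rw [max_eq_left (by linarith)]
    have hB : ∑ k ∈ Finset.Ico K m, max (l.getD k 0 - θ) 0 = 0 := by
      refine Finset.sum_eq_zero fun k hk => ?_
      rw [Finset.mem_Ico] at hk
      have : l.getD k 0 ≤ θ := sorted_getD_mono hsort hk.1 (by rw [hlen]; exact hk.2)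
      rw [max_eq_right (by linarith)]
    rw [hA, hB, add_zero]
  have hcast := (delta_facts Γ hΓ m).2.2
  have hkth : kthLargest S d0 (K + 1) = θ := by simp [kthLargest, hθdef, hldef]
  rw [sum_Icc_kth, hkth]
  calc ∑ i ∈ S, d0 i * u i ≤ (∑ k ∈ Finset.range K, (l.getD k 0 - θ)) + θ * min Γ (m:ℝ) := by
        rw [← step2]; exact step1
    _ = (∑ k ∈ Finset.range K, l.getD k 0) - (K:ℝ) * θ + θ * min Γ (m:ℝ) := by
        rw [Finset.sum_sub_distrib, Finset.sum_const, Finset.card_range, nsmul_eq_mul]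
    _ = (∑ k ∈ Finset.range K, l.getD k 0) +
        (min Γ (m:ℝ) - min (⌊Γ⌋₊:ℝ) (m:ℝ)) * θ := by rw [← hcast]; ring

lemma knap_ex_u {n : ℕ} (S : Finset (Fin n)) (d0 : Fin n → ℝ) (hd0 : ∀ i, 0 ≤ d0 i)
    (Γ : ℝ) (hΓ : 0 ≤ Γ) :
    ∃ u : Fin n → ℝ, (∀ i, u i ∈ Set.Icc (0:ℝ) 1) ∧ (∑ i, u i) ≤ Γ ∧
      ∑ i ∈ S, d0 i * u i =
        (∑ k ∈ Finset.Icc 1 (min S.card ⌊Γ⌋₊), kthLargest S d0 k) +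
          (min Γ (S.card : ℝ) - min (⌊Γ⌋₊ : ℝ) (S.card : ℝ)) *
            kthLargest S d0 (min S.card ⌊Γ⌋₊ + 1) := by
  classical
  obtain ⟨hsort, hlen, hpos⟩ := lfacts S d0 hd0
  obtain ⟨hΔ0, hΔ1, hcast⟩ := delta_facts Γ hΓ S.card
  set l := (S.val.map d0).sort (· ≥ ·) with hldef
  set m := S.card with hmdef
  set K := min m ⌊Γ⌋₊ with hKdef
  set Δ := min Γ (m:ℝ) - min (⌊Γ⌋₊:ℝ) (m:ℝ) with hΔdef
  have hKm : K ≤ m := min_le_left _ _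
  set L := S.toList.mergeSort (fun i j => decide (d0 j ≤ d0 i)) with hLdef
  have hperm : L.Perm S.toList := List.mergeSort_perm _ _
  have hnod : L.Nodup := hperm.nodup_iff.mpr S.nodup_toList
  have hlenL : L.length = m := by rw [hperm.length_eq, Finset.length_toList]
  have hmap : L.map d0 = l := by
    have hp3 : (L.map d0).Perm l := by
      refine (hperm.map d0).trans (Multiset.coe_eq_coe.mp ?_)
      rw [← Multiset.map_coe, Finset.coe_toList, hldef, Multiset.sort_eq]
    have hsorted : (L.map d0).Pairwise (· ≥ ·) := by
      rw [List.pairwise_map]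
      have := List.pairwise_mergeSort (le := fun i j => decide (d0 j ≤ d0 i))
        (by intro a b c h1 h2; simp only [decide_eq_true_eq] at *; exact h2.trans h1)
        (by intro a b; simp only [Bool.or_eq_true, decide_eq_true_eq]; exact le_total (d0 b) (d0 a))
        S.toList
      refine this.imp ?_
      intro a b h; simp only [decide_eq_true_eq] at h; exact h
    exact hp3.eq_of_pairwise' hsorted hsort
  set w : ℕ → ℝ := fun k => if k < K then 1 else if k = K then Δ else 0 with hwdef
  have hw01 : ∀ k, 0 ≤ w k ∧ w k ≤ 1 := by
    intro k; simp only [hwdef]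
    split_ifs
    · norm_num
    · exact ⟨hΔ0, hΔ1⟩
    · norm_num
  set u : Fin n → ℝ := fun i => if i ∈ L then w (L.idxOf i) else 0 with hudef
  have hu : ∀ i, u i ∈ Set.Icc (0:ℝ) 1 := by
    intro i; simp only [hudef, Set.mem_Icc]
    split_ifs with h
    · exact ⟨(hw01 _).1, (hw01 _).2⟩
    · norm_num
  have hSsum : ∀ f : Fin n → ℝ, ∑ i ∈ S, f i = ∑ k ∈ Finset.range m, (L.map f).getD k 0 := by
    intro f
    have h1 : ∑ i ∈ S, f i = (S.toList.map f).sum := by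
      rw [Finset.sum, ← Finset.coe_toList S]
      simp [Multiset.map_coe, Multiset.sum_coe]
    rw [h1, ← (hperm.map f).sum_eq, list_sum_getD, List.length_map, hlenL]
  have hgetL : ∀ k (hk : k < m), ∀ f : Fin n → ℝ,
      (L.map f).getD k 0 = f (L.get ⟨k, by rw [hlenL]; exact hk⟩) := by
    intro k hk f
    rw [List.getD_eq_getElem _ _ (by rw [List.length_map, hlenL]; exact hk), List.getElem_map]
    rfl
  have hugetk : ∀ k (hk : k < m), u (L.get ⟨k, by rw [hlenL]; exact hk⟩) = w k := by
    intro k hk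
    have hmem : L.get ⟨k, by rw [hlenL]; exact hk⟩ ∈ L := List.get_mem _ _
    simp only [hudef, if_pos hmem, List.get_idxOf hnod]
  have hwsum : ∀ f : ℕ → ℝ, ∑ k ∈ Finset.range m, f k * w k =
      (∑ k ∈ Finset.range K, f k) + (if K < m then f K * Δ else 0) := by
    intro f
    rcases lt_or_eq_of_le hKm with h | h
    · rw [if_pos h, Finset.range_eq_Ico,
        ← Finset.sum_Ico_consecutive _ (Nat.zero_le K) (le_of_lt h),
        ← Finset.sum_Ico_consecutive _ (Nat.le_succ K) (Nat.succ_le_of_lt h)]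
      have e1 : ∑ k ∈ Finset.Ico 0 K, f k * w k = ∑ k ∈ Finset.range K, f k := by
        rw [← Finset.range_eq_Ico]
        refine Finset.sum_congr rfl fun k hk => ?_
        rw [Finset.mem_range] at hk
        simp [hwdef, hk]
      have e2 : ∑ k ∈ Finset.Ico K (K+1), f k * w k = f K * Δ := by
        rw [Finset.Ico_add_one_right_eq_Icc, Finset.Icc_self, Finset.sum_singleton]
        simp [hwdef]
      have e3 : ∑ k ∈ Finset.Ico (K+1) m, f k * w k = 0 := by
        refine Finset.sum_eq_zero fun k hk => ?_
        rw [Finset.mem_Ico] at hk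
        have h1 : ¬ k < K := by omega
        have h2 : k ≠ K := by omega
        simp [hwdef, h1, h2]
      rw [e1, e2, e3, add_zero, Finset.range_eq_Ico]
    · rw [if_neg (by omega), add_zero, ← h]
      refine Finset.sum_congr rfl fun k hk => ?_
      rw [Finset.mem_range] at hk
      simp [hwdef, hk]
  have husum : ∑ i ∈ S, u i = (K:ℝ) + (if K < m then Δ else 0) := by
    rw [hSsum u]
    have : ∀ k ∈ Finset.range m, (L.map u).getD k 0 = (1:ℝ) * w k := by
      intro k hk
      rw [Finset.mem_range] at hk
      rw [hgetL k hk u, hugetk k hk, one_mul]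
    rw [Finset.sum_congr rfl this, hwsum (fun _ => (1:ℝ))]
    simp
  have hval : ∑ i ∈ S, d0 i * u i =
      (∑ k ∈ Finset.range K, l.getD k 0) + (if K < m then l.getD K 0 * Δ else 0) := by
    rw [hSsum (fun i => d0 i * u i)]
    have : ∀ k ∈ Finset.range m, (L.map fun i => d0 i * u i).getD k 0 = l.getD k 0 * w k := by
      intro k hk
      rw [Finset.mem_range] at hk
      rw [hgetL k hk (fun i => d0 i * u i), hugetk k hk]
      congr 1
      rw [← hmap]
      exact (hgetL k hk d0).symm
    rw [Finset.sum_congr rfl this, hwsum (fun k => l.getD k 0)]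
  refine ⟨u, hu, ?_, ?_⟩
  · have huniv : ∑ i, u i = ∑ i ∈ S, u i := by
      refine (Finset.sum_subset (Finset.subset_univ S) fun i _ hi => ?_).symm
      have : i ∉ L := fun hmem => hi (Finset.mem_toList.mp (hperm.mem_iff.mp hmem))
      simp [hudef, this]
    rw [huniv, husum]
    rcases lt_or_eq_of_le hKm with h | h
    · rw [if_pos h]
      have h1 : (K:ℝ) = min (⌊Γ⌋₊:ℝ) (m:ℝ) := hcast
      have h2 : min Γ (m:ℝ) ≤ Γ := min_le_left _ _
      rw [hΔdef]; linarith
    · rw [if_neg (by omega), add_zero]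
      have hmfl : m ≤ ⌊Γ⌋₊ := by omega
      calc (K:ℝ) ≤ (⌊Γ⌋₊:ℝ) := by exact_mod_cast le_trans hKm hmfl
        _ ≤ Γ := Nat.floor_le hΓ
  · rw [hval, sum_Icc_kth]
    have hkth : kthLargest S d0 (K + 1) = l.getD K 0 := by simp [kthLargest, hldef]
    rw [hkth]
    rcases lt_or_eq_of_le hKm with h | h
    · rw [if_pos h]; ring
    · rw [if_neg (by omega), add_zero]
      have hθz : l.getD K 0 = 0 := List.getD_eq_default _ _ (by rw [hlen, ← h])
      rw [hθz, mul_zero, add_zero]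

lemma budget_sum_expand {n : ℕ} (S : Finset (Fin n)) (d0 : Fin n → ℝ) (α : ℝ)
    (u : Fin n → ℝ) :
    ∑ i ∈ S, d0 i * (1 + α * u i) = (∑ i ∈ S, d0 i) + α * ∑ i ∈ S, d0 i * u i := by
  rw [Finset.mul_sum, ← Finset.sum_add_distrib]
  exact Finset.sum_congr rfl fun i _ => by ring

lemma budget_sum_bound {n : ℕ} (S : Finset (Fin n)) (d0 : Fin n → ℝ)
    (hd0 : ∀ i, 0 ≤ d0 i) (α Γ : ℝ) (hα : 0 < α) (hΓ : 0 ≤ Γ) :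
    ∀ d ∈ budgetU d0 α Γ, ∑ i ∈ S, d i ≤
      (∑ i ∈ S, d0 i) + α *
        ((∑ k ∈ Finset.Icc 1 (min S.card ⌊Γ⌋₊), kthLargest S d0 k) +
          (min Γ (S.card : ℝ) - min (⌊Γ⌋₊ : ℝ) (S.card : ℝ)) *
            kthLargest S d0 (min S.card ⌊Γ⌋₊ + 1)) := by
  rintro d ⟨u, hu, hd, hsum⟩
  have h1 : ∑ i ∈ S, d i = (∑ i ∈ S, d0 i) + α * ∑ i ∈ S, d0 i * u i := by
    rw [Finset.sum_congr rfl fun i _ => hd i, budget_sum_expand]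
  rw [h1]
  exact add_le_add_right (mul_le_mul_of_nonneg_left
    (knap_ub_u S d0 hd0 Γ hΓ u hu hsum) hα.le) _

lemma budget_sum_wit {n : ℕ} (S : Finset (Fin n)) (d0 : Fin n → ℝ)
    (hd0 : ∀ i, 0 ≤ d0 i) (α Γ : ℝ) (hα : 0 < α) (hΓ : 0 ≤ Γ) :
    ∃ d ∈ budgetU d0 α Γ, ∑ i ∈ S, d i =
      (∑ i ∈ S, d0 i) + α *
        ((∑ k ∈ Finset.Icc 1 (min S.card ⌊Γ⌋₊), kthLargest S d0 k) +
          (min Γ (S.card : ℝ) - min (⌊Γ⌋₊ : ℝ) (S.card : ℝ)) *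
            kthLargest S d0 (min S.card ⌊Γ⌋₊ + 1)) := by
  obtain ⟨u, hu, hsum, hval⟩ := knap_ex_u S d0 hd0 Γ hΓ
  refine ⟨fun i => d0 i * (1 + α * u i), ⟨u, hu, fun _ => rfl, hsum⟩, ?_⟩
  rw [budget_sum_expand, hval]


/-- closed form of the worst-case makespan of a fixed allocation `x` over
the budgeted uncertainty set, and the resulting upper bound on `SA`. -/
theorem budget_fixed_allocation_sup
    (n : ℕ) (hn : 1 ≤ n) (d0 : Fin n → ℝ) (hd0 : ∀ i, 0 ≤ d0 i)
    (α Γ : ℝ) (hα : 0 < α) (hΓ : 0 ≤ Γ)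
    (x : Fin n → Bool) (I Ibar : Finset (Fin n))
    (hI : I = Finset.univ.filter (fun i => x i = true))
    (hIbar : Ibar = Finset.univ.filter (fun i => x i = false)) :
    sSup ((fun d => M2 x d) '' budgetU d0 α Γ) =
      max
        ((∑ i ∈ I, d0 i) + α *
          ((∑ k ∈ Finset.Icc 1 (min I.card ⌊Γ⌋₊), kthLargest I d0 k) +
            (min Γ (I.card : ℝ) - min (⌊Γ⌋₊ : ℝ) (I.card : ℝ)) *
              kthLargest I d0 (min I.card ⌊Γ⌋₊ + 1)))
        ((∑ i ∈ Ibar, d0 i) + α *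
          ((∑ k ∈ Finset.Icc 1 (min Ibar.card ⌊Γ⌋₊), kthLargest Ibar d0 k) +
            (min Γ (Ibar.card : ℝ) - min (⌊Γ⌋₊ : ℝ) (Ibar.card : ℝ)) *
              kthLargest Ibar d0 (min Ibar.card ⌊Γ⌋₊ + 1))) ∧
    SA (budgetU d0 α Γ) ≤
      max
        ((∑ i ∈ I, d0 i) + α *
          ((∑ k ∈ Finset.Icc 1 (min I.card ⌊Γ⌋₊), kthLargest I d0 k) +
            (min Γ (I.card : ℝ) - min (⌊Γ⌋₊ : ℝ) (I.card : ℝ)) *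
              kthLargest I d0 (min I.card ⌊Γ⌋₊ + 1)))
        ((∑ i ∈ Ibar, d0 i) + α *
          ((∑ k ∈ Finset.Icc 1 (min Ibar.card ⌊Γ⌋₊), kthLargest Ibar d0 k) +
            (min Γ (Ibar.card : ℝ) - min (⌊Γ⌋₊ : ℝ) (Ibar.card : ℝ)) *
              kthLargest Ibar d0 (min Ibar.card ⌊Γ⌋₊ + 1))) := by
  set CI := (∑ i ∈ I, d0 i) + α *
    ((∑ k ∈ Finset.Icc 1 (min I.card ⌊Γ⌋₊), kthLargest I d0 k) +
      (min Γ (I.card : ℝ) - min (⌊Γ⌋₊ : ℝ) (I.card : ℝ)) *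
        kthLargest I d0 (min I.card ⌊Γ⌋₊ + 1)) with hCI
  set CJ := (∑ i ∈ Ibar, d0 i) + α *
    ((∑ k ∈ Finset.Icc 1 (min Ibar.card ⌊Γ⌋₊), kthLargest Ibar d0 k) +
      (min Γ (Ibar.card : ℝ) - min (⌊Γ⌋₊ : ℝ) (Ibar.card : ℝ)) *
        kthLargest Ibar d0 (min Ibar.card ⌊Γ⌋₊ + 1)) with hCJ
  have hM2 : ∀ d, M2 x d = max (∑ i ∈ I, d i) (∑ i ∈ Ibar, d i) := by
    intro d; rw [M2, hI, hIbar]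
  have hboundI := budget_sum_bound I d0 hd0 α Γ hα hΓ
  have hboundJ := budget_sum_bound Ibar d0 hd0 α Γ hα hΓ
  obtain ⟨dI, hdI, hdIval⟩ := budget_sum_wit I d0 hd0 α Γ hα hΓ
  obtain ⟨dJ, hdJ, hdJval⟩ := budget_sum_wit Ibar d0 hd0 α Γ hα hΓ
  have hub : ∀ y ∈ (fun d => M2 x d) '' budgetU d0 α Γ, y ≤ max CI CJ := by
    rintro y ⟨d, hd, rfl⟩
    show M2 x d ≤ max CI CJ
    rw [hM2]
    exact max_le_max (hboundI d hd) (hboundJ d hd)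
  have hbdd : BddAbove ((fun d => M2 x d) '' budgetU d0 α Γ) := ⟨max CI CJ, hub⟩
  have hmain : sSup ((fun d => M2 x d) '' budgetU d0 α Γ) = max CI CJ := by
    refine le_antisymm (csSup_le ⟨M2 x dI, ⟨dI, hdI, rfl⟩⟩ hub) (max_le ?_ ?_)
    · calc CI = ∑ i ∈ I, dI i := hdIval.symm
        _ ≤ M2 x dI := by rw [hM2]; exact le_max_left _ _
        _ ≤ _ := le_csSup hbdd ⟨dI, hdI, rfl⟩
    · calc CJ = ∑ i ∈ Ibar, dJ i := hdJval.symm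
        _ ≤ M2 x dJ := by rw [hM2]; exact le_max_right _ _
        _ ≤ _ := le_csSup hbdd ⟨dJ, hdJ, rfl⟩
  refine ⟨hmain, ?_⟩
  calc SA (budgetU d0 α Γ) ≤ sSup ((fun d => M2 x d) '' budgetU d0 α Γ) :=
        ciInf_le (Set.Finite.bddBelow (Set.finite_range _)) x
    _ = max CI CJ := hmain
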